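/- If 𝒫 ⊆ ℤ^m and 𝒬 ⊆ ℤ^n are polyhedral sets and E: ℤ^m → ℤ^n is an integer affine transform E(v) = vA + b with A ∈ ℤ^{m×n}, b ∈ ℤ^n, then E(𝒫) and E^{-1}(𝒬) are polyhedral sets. -/

import Mathlib

/-- An elementary region in `ℤ^m`: a hyperplane `{z | a·z = b}`, an open half-space
`{z | a·z > b}`, or a congruence set `{z | a·z ≡ b (mod c)}` with `c > 0`. -/
def ElementaryRegion {m : ℕ} (E : Set (Fin m → ℤ)) : Prop :=
  (∃ (a : Fin m → ℤ) (b : ℤ), E = {z | (∑ i, a i * z i) = b}) ∨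
  (∃ (a : Fin m → ℤ) (b : ℤ), E = {z | (∑ i, a i * z i) > b}) ∨
  (∃ (a : Fin m → ℤ) (b c : ℤ), 0 < c ∧ E = {z | (∑ i, a i * z i) ≡ b [ZMOD c]})

/-- A basic polyhedral set is a finite intersection of elementary regions. -/
def BasicPolyhedral {m : ℕ} (B : Set (Fin m → ℤ)) : Prop :=
  ∃ (k : ℕ) (E : Fin k → Set (Fin m → ℤ)),
    (∀ i, ElementaryRegion (E i)) ∧ B = ⋂ i, E i

/-- A polyhedral set is a finite disjoint union of basic polyhedral sets. -/
def Polyhedral {m : ℕ} (P : Set (Fin m → ℤ)) : Prop :=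
  ∃ (k : ℕ) (B : Fin k → Set (Fin m → ℤ)),
    (∀ i, BasicPolyhedral (B i)) ∧
    (∀ i j, i ≠ j → Disjoint (B i) (B j)) ∧
    P = ⋃ i, B i

namespace PolyAux

open Set Classical

variable {m : ℕ}

lemma basic_univ : BasicPolyhedral (univ : Set (Fin m → ℤ)) :=
  ⟨0, fun i => i.elim0, fun i => i.elim0, by simp⟩

lemma basic_of_elem {E : Set (Fin m → ℤ)} (h : ElementaryRegion E) : BasicPolyhedral E :=
  ⟨1, fun _ => E, fun _ => h, (Set.iInter_const E).symm⟩

lemma basic_empty : BasicPolyhedral (∅ : Set (Fin m → ℤ)) := by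
  have : (∅ : Set (Fin m → ℤ)) = {z | (∑ i, (0:ℤ) * z i) = 1} := by
    ext z; simp
  rw [this]
  exact basic_of_elem (Or.inl ⟨0, 1, rfl⟩)

lemma poly_empty : Polyhedral (∅ : Set (Fin m → ℤ)) :=
  ⟨0, fun i => i.elim0, fun i => i.elim0, fun i => i.elim0, by simp⟩

lemma poly_of_basic {B : Set (Fin m → ℤ)} (h : BasicPolyhedral B) : Polyhedral B :=
  ⟨1, fun _ => B, fun _ => h, fun i j hij => absurd (Subsingleton.elim i j) hij, (Set.iUnion_const B).symm⟩

lemma basic_iff_list {B : Set (Fin m → ℤ)} :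
    BasicPolyhedral B ↔ ∃ l : List (Set (Fin m → ℤ)),
      (∀ E ∈ l, ElementaryRegion E) ∧ B = {z | ∀ E ∈ l, z ∈ E} := by
  constructor
  · rintro ⟨k, E, hE, rfl⟩
    refine ⟨List.ofFn E, ?_, ?_⟩
    · intro E' hE'
      rw [List.mem_ofFn] at hE'
      obtain ⟨i, rfl⟩ := hE'
      exact hE i
    · ext z
      simp only [Set.mem_iInter, Set.mem_setOf_eq, List.mem_ofFn, Set.mem_range]
      aesop
  · rintro ⟨l, hl, rfl⟩
    refine ⟨l.length, l.get, fun i => hl _ (l.get_mem _), ?_⟩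
    ext z
    simp only [Set.mem_setOf_eq, Set.mem_iInter]
    constructor
    · intro h i; exact h _ (l.get_mem _)
    · intro h E hE
      obtain ⟨i, rfl⟩ := List.mem_iff_get.mp hE
      exact h i

lemma poly_iff_list {P : Set (Fin m → ℤ)} :
    Polyhedral P ↔ ∃ l : List (Set (Fin m → ℤ)),
      (∀ B ∈ l, BasicPolyhedral B) ∧ l.Pairwise Disjoint ∧ P = {z | ∃ B ∈ l, z ∈ B} := by
  constructor
  · rintro ⟨k, B, hB, hd, rfl⟩
    refine ⟨List.ofFn B, ?_, ?_, ?_⟩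
    · intro B' hB'
      rw [List.mem_ofFn] at hB'
      obtain ⟨i, rfl⟩ := hB'
      exact hB i
    · rw [List.pairwise_ofFn]
      intro i j hij
      exact hd i j (ne_of_lt hij)
    · ext z
      simp only [Set.mem_iUnion, Set.mem_setOf_eq, List.mem_ofFn, Set.mem_range]
      aesop
  · rintro ⟨l, hl, hd, rfl⟩
    refine ⟨l.length, l.get, fun i => hl _ (l.get_mem _), ?_, ?_⟩
    · intro i j hij
      rcases lt_or_gt_of_ne hij with h | h
      · exact List.pairwise_iff_get.mp hd i j h
      · exact (List.pairwise_iff_get.mp hd j i h).symm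
    · ext z
      simp only [Set.mem_setOf_eq, Set.mem_iUnion]
      constructor
      · rintro ⟨E, hE, hz⟩
        obtain ⟨i, rfl⟩ := List.mem_iff_get.mp hE
        exact ⟨i, hz⟩
      · rintro ⟨i, hz⟩
        exact ⟨_, l.get_mem _, hz⟩

lemma basic_inter {B C : Set (Fin m → ℤ)} (hB : BasicPolyhedral B) (hC : BasicPolyhedral C) :
    BasicPolyhedral (B ∩ C) := by
  obtain ⟨l₁, hl₁, rfl⟩ := basic_iff_list.mp hB
  obtain ⟨l₂, hl₂, rfl⟩ := basic_iff_list.mp hC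
  refine basic_iff_list.mpr ⟨l₁ ++ l₂, ?_, ?_⟩
  · intro E hE
    rcases List.mem_append.mp hE with h | h
    exacts [hl₁ _ h, hl₂ _ h]
  · ext z
    simp only [Set.mem_inter_iff, Set.mem_setOf_eq, List.mem_append]
    exact ⟨fun ⟨h1,h2⟩ E hE => hE.elim (h1 E) (h2 E), fun h => ⟨fun E hE => h E (Or.inl hE), fun E hE => h E (Or.inr hE)⟩⟩

lemma poly_inter_basic {P C : Set (Fin m → ℤ)} (hP : Polyhedral P) (hC : BasicPolyhedral C) :
    Polyhedral (P ∩ C) := by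
  obtain ⟨k, B, hB, hd, rfl⟩ := hP
  refine ⟨k, fun i => B i ∩ C, fun i => basic_inter (hB i) hC, ?_, ?_⟩
  · intro i j hij
    exact (hd i j hij).mono inf_le_left inf_le_left
  · rw [Set.iUnion_inter]

lemma poly_disjoint_union_two {P Q : Set (Fin m → ℤ)} (hP : Polyhedral P) (hQ : Polyhedral Q)
    (hd : Disjoint P Q) : Polyhedral (P ∪ Q) := by
  obtain ⟨l₁, hl₁, hd₁, rfl⟩ := poly_iff_list.mp hP
  obtain ⟨l₂, hl₂, hd₂, rfl⟩ := poly_iff_list.mp hQ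
  refine poly_iff_list.mpr ⟨l₁ ++ l₂, ?_, ?_, ?_⟩
  · intro B hB
    rcases List.mem_append.mp hB with h | h
    exacts [hl₁ _ h, hl₂ _ h]
  · rw [List.pairwise_append]
    refine ⟨hd₁, hd₂, fun a ha b hb => hd.mono ?_ ?_⟩
    · intro z hz; exact ⟨a, ha, hz⟩
    · intro z hz; exact ⟨b, hb, hz⟩
  · ext z
    simp only [Set.mem_union, Set.mem_setOf_eq]
    constructor
    · rintro (⟨B, hB, hz⟩ | ⟨B, hB, hz⟩)
      exacts [⟨B, List.mem_append_left _ hB, hz⟩, ⟨B, List.mem_append_right _ hB, hz⟩]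
    · rintro ⟨B, hB, hz⟩
      rcases List.mem_append.mp hB with h | h
      exacts [Or.inl ⟨B, h, hz⟩, Or.inr ⟨B, h, hz⟩]

lemma poly_disjoint_union_fin : ∀ {N : ℕ} (F : Fin N → Set (Fin m → ℤ)),
    (∀ i, Polyhedral (F i)) → (∀ i j, i ≠ j → Disjoint (F i) (F j)) →
    Polyhedral (⋃ i, F i) := by
  intro N
  induction N with
  | zero => intro F _ _; simp only [Set.iUnion_of_empty]; exact poly_empty
  | succ N ih =>
    intro F hF hd
    have : (⋃ i, F i) = F 0 ∪ ⋃ i : Fin N, F i.succ := by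
      ext z; simp [Fin.exists_fin_succ]
    rw [this]
    refine poly_disjoint_union_two (hF 0) (ih _ (fun i => hF i.succ) ?_) ?_
    · intro i j hij
      exact hd i.succ j.succ (by simpa using hij)
    · rw [Set.disjoint_iUnion_right]
      intro i
      exact hd 0 i.succ (Fin.succ_ne_zero i).symm

lemma poly_inter {P Q : Set (Fin m → ℤ)} (hP : Polyhedral P) (hQ : Polyhedral Q) :
    Polyhedral (P ∩ Q) := by
  obtain ⟨k, C, hC, hd, rfl⟩ := hQ
  rw [Set.inter_iUnion]
  refine poly_disjoint_union_fin _ (fun i => poly_inter_basic hP (hC i)) ?_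
  intro i j hij
  exact (hd i j hij).mono inf_le_right inf_le_right

lemma poly_iInter_fin : ∀ {N : ℕ} (F : Fin N → Set (Fin m → ℤ)),
    (∀ i, Polyhedral (F i)) → Polyhedral (⋂ i, F i) := by
  intro N
  induction N with
  | zero => intro F _; simp only [Set.iInter_of_empty]; exact poly_of_basic basic_univ
  | succ N ih =>
    intro F hF
    have : (⋂ i, F i) = F 0 ∩ ⋂ i : Fin N, F i.succ := by
      ext z; simp [Fin.forall_fin_succ]
    rw [this]
    exact poly_inter (hF 0) (ih _ fun i => hF i.succ)

end PolyAux

namespace PolyAux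
open Set

lemma sum_neg (a z : Fin m → ℤ) :
    (∑ i, (-(a i)) * z i) = -∑ i, a i * z i := by
  simp [neg_mul, Finset.sum_neg_distrib]

lemma poly_compl_elem {E : Set (Fin m → ℤ)} (h : ElementaryRegion E) : Polyhedral Eᶜ := by
  rcases h with ⟨a, b, rfl⟩ | ⟨a, b, rfl⟩ | ⟨a, b, c, hc, rfl⟩
  · -- complement of equality
    refine ⟨2, ![{z | (∑ i, a i * z i) > b}, {z | (∑ i, (-(a i)) * z i) > -b}], ?_, ?_, ?_⟩
    · intro i
      fin_cases i
      · exact basic_of_elem (Or.inr (Or.inl ⟨a, b, rfl⟩))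
      · exact basic_of_elem (Or.inr (Or.inl ⟨fun i => -(a i), -b, rfl⟩))
    · have key : Disjoint {z : Fin m → ℤ | (∑ i, a i * z i) > b}
          {z : Fin m → ℤ | (∑ i, (-(a i)) * z i) > -b} := by
        rw [Set.disjoint_left]
        intro z h1 h2
        simp only [Set.mem_setOf_eq, sum_neg] at h1 h2
        omega
      intro i j hij
      fin_cases i <;> fin_cases j <;> simp_all
      exact key.symm
    · ext z
      simp only [Set.mem_compl_iff, Set.mem_setOf_eq, Set.mem_iUnion]
      rw [Fin.exists_fin_two]
      simp only [Matrix.cons_val_zero, Matrix.cons_val_one, Matrix.head_cons, Set.mem_setOf_eq,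
        sum_neg]
      omega
  · -- complement of strict inequality
    have : {z : Fin m → ℤ | (∑ i, a i * z i) > b}ᶜ
        = {z | (∑ i, (-(a i)) * z i) > -b - 1} := by
      ext z
      simp only [Set.mem_compl_iff, Set.mem_setOf_eq, sum_neg]
      omega
    rw [this]
    exact poly_of_basic (basic_of_elem (Or.inr (Or.inl ⟨fun i => -(a i), -b - 1, rfl⟩)))
  · -- complement of congruence
    classical
    refine ⟨c.toNat, fun d => if ((d : ℕ) : ℤ) ≡ b [ZMOD c] then ∅
      else {z | (∑ i, a i * z i) ≡ ((d : ℕ) : ℤ) [ZMOD c]}, ?_, ?_, ?_⟩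
    · intro d
      simp only
      split
      · exact basic_empty
      · exact basic_of_elem (Or.inr (Or.inr ⟨a, _, c, hc, rfl⟩))
    · intro i j hij
      simp only
      split <;> split
      · simp
      · simp
      · simp
      · rw [Set.disjoint_left]
        intro z h1 h2
        simp only [Set.mem_setOf_eq] at h1 h2
        have h3 : ((i : ℕ) : ℤ) ≡ ((j : ℕ) : ℤ) [ZMOD c] := h1.symm.trans h2
        have h4 : ((i : ℕ) : ℤ) % c = ((j : ℕ) : ℤ) % c := h3
        have hi : ((i : ℕ) : ℤ) < c := by
          have := i.isLt; omega
        have hj : ((j : ℕ) : ℤ) < c := by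
          have := j.isLt; omega
        rw [Int.emod_eq_of_lt (by positivity) hi, Int.emod_eq_of_lt (by positivity) hj] at h4
        exact hij (Fin.ext (by omega))
    · ext z
      simp only [Set.mem_compl_iff, Set.mem_setOf_eq, Set.mem_iUnion]
      constructor
      · intro hz
        have h0 : (0:ℤ) ≤ (∑ i, a i * z i) % c := Int.emod_nonneg _ (by omega)
        have h1 : (∑ i, a i * z i) % c < c := Int.emod_lt_of_pos _ hc
        refine ⟨⟨((∑ i, a i * z i) % c).toNat, by omega⟩, ?_⟩
        have hcast : ((((∑ i, a i * z i) % c).toNat : ℕ) : ℤ) = (∑ i, a i * z i) % c := by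
          omega
        have hmem : (∑ i, a i * z i) ≡ (∑ i, a i * z i) % c [ZMOD c] :=
          (Int.emod_emod_of_dvd _ dvd_rfl).symm
        rw [if_neg, Set.mem_setOf_eq]
        · simpa [hcast] using hmem.symm.symm
        · rw [hcast]
          intro hcon
          exact hz (hmem.trans hcon)
      · rintro ⟨d, hd⟩
        by_cases hcase : ((d : ℕ) : ℤ) ≡ b [ZMOD c]
        · rw [if_pos hcase] at hd; exact absurd hd (Set.notMem_empty z)
        · rw [if_neg hcase] at hd
          intro hzb
          exact hcase (hd.symm.trans hzb)

lemma basic_partial {N : ℕ} (E : Fin N → Set (Fin m → ℤ)) (hE : ∀ i, ElementaryRegion (E i))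
    (i : Fin N) : BasicPolyhedral {z | ∀ j : Fin N, j < i → z ∈ E j} := by
  refine ⟨i.val, fun j => E (Fin.castLE i.isLt.le j), fun j => hE _, ?_⟩
  ext z
  simp only [Set.mem_setOf_eq, Set.mem_iInter]
  constructor
  · intro h j
    exact h _ (by simp [Fin.lt_def, Fin.castLE])
  · intro h j hj
    have : j = Fin.castLE i.isLt.le ⟨j.val, hj⟩ := by
      ext; rfl
    rw [this]
    exact h _

lemma poly_compl_basic {B : Set (Fin m → ℤ)} (h : BasicPolyhedral B) : Polyhedral Bᶜ := by
  classical
  obtain ⟨N, E, hE, rfl⟩ := h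
  have key : (⋂ i, E i)ᶜ = ⋃ i, (E i)ᶜ ∩ {z | ∀ j : Fin N, j < i → z ∈ E j} := by
    ext z
    simp only [Set.mem_compl_iff, Set.mem_iInter, Set.mem_iUnion, Set.mem_inter_iff,
      Set.mem_setOf_eq, not_forall]
    constructor
    · rintro ⟨i, hi⟩
      have hne : (Finset.univ.filter (fun i => z ∉ E i)).Nonempty :=
        ⟨i, by simp [hi]⟩
      obtain ⟨i₀, hi₀mem, hi₀min⟩ := Finset.exists_min_image _ id hne
      simp only [Finset.mem_filter] at hi₀mem
      refine ⟨i₀, hi₀mem.2, ?_⟩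
      intro j hj
      by_contra hzj
      exact absurd (hi₀min j (by simp [hzj])) (by simpa using hj)
    · rintro ⟨i, hi, _⟩
      exact ⟨i, hi⟩
  rw [key]
  refine poly_disjoint_union_fin _ ?_ ?_
  · intro i
    exact poly_inter_basic (poly_compl_elem (hE i)) (basic_partial E hE i)
  · intro i j hij
    rcases lt_or_gt_of_ne hij with hlt | hlt
    · rw [Set.disjoint_left]
      rintro z ⟨hz1, _⟩ ⟨_, hz2⟩
      exact hz1 (hz2 i hlt)
    · rw [Set.disjoint_left]
      rintro z ⟨_, hz1⟩ ⟨hz2, _⟩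
      exact hz2 (hz1 j hlt)

lemma poly_compl {P : Set (Fin m → ℤ)} (h : Polyhedral P) : Polyhedral Pᶜ := by
  obtain ⟨k, B, hB, _, rfl⟩ := h
  rw [Set.compl_iUnion]
  exact poly_iInter_fin _ fun i => poly_compl_basic (hB i)

lemma poly_union {P Q : Set (Fin m → ℤ)} (hP : Polyhedral P) (hQ : Polyhedral Q) :
    Polyhedral (P ∪ Q) := by
  have : P ∪ Q = P ∪ (Q ∩ Pᶜ) := by
    ext z; by_cases hz : z ∈ P <;> simp [hz]
  rw [this]
  refine poly_disjoint_union_two hP (poly_inter hQ (poly_compl hP)) ?_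
  rw [Set.disjoint_left]
  rintro z hz ⟨_, hz2⟩
  exact hz2 hz

lemma poly_union_fin : ∀ {N : ℕ} (F : Fin N → Set (Fin m → ℤ)),
    (∀ i, Polyhedral (F i)) → Polyhedral (⋃ i, F i) := by
  intro N
  induction N with
  | zero => intro F _; simp only [Set.iUnion_of_empty]; exact poly_empty
  | succ N ih =>
    intro F hF
    have : (⋃ i, F i) = F 0 ∪ ⋃ i : Fin N, F i.succ := by
      ext z; simp [Fin.exists_fin_succ]
    rw [this]
    exact poly_union (hF 0) (ih _ fun i => hF i.succ)

lemma poly_union_list {ι : Type*} (l : List ι) (F : ι → Set (Fin m → ℤ))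
    (hF : ∀ x ∈ l, Polyhedral (F x)) : Polyhedral {z | ∃ x ∈ l, z ∈ F x} := by
  induction l with
  | nil => simpa using poly_empty
  | cons a l ih =>
    have : {z : Fin m → ℤ | ∃ x ∈ a :: l, z ∈ F x} = F a ∪ {z | ∃ x ∈ l, z ∈ F x} := by
      ext z; simp
    rw [this]
    exact poly_union (hF a (by simp)) (ih fun x hx => hF x (by simp [hx]))

lemma poly_union_finset {ι : Type*} (s : Finset ι) (F : ι → Set (Fin m → ℤ))
    (hF : ∀ x ∈ s, Polyhedral (F x)) : Polyhedral {z | ∃ x ∈ s, z ∈ F x} := by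
  have := poly_union_list s.toList F (fun x hx => hF x (by simpa using hx))
  have he : {z : Fin m → ℤ | ∃ x ∈ s.toList, z ∈ F x} = {z | ∃ x ∈ s, z ∈ F x} := by
    ext z; simp
  rwa [he] at this

end PolyAux

namespace PolyAux
open Set

variable {n : ℕ}

lemma affine_sum (A : Matrix (Fin m) (Fin n) ℤ) (b : Fin n → ℤ) (a : Fin n → ℤ) (v : Fin m → ℤ) :
    (∑ j, a j * ((∑ i, v i * A i j) + b j))
      = (∑ i, (∑ j, A i j * a j) * v i) + ∑ j, a j * b j := by
  have h1 : ∀ j, a j * ((∑ i, v i * A i j) + b j) = (∑ i, A i j * a j * v i) + a j * b j := by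
    intro j
    rw [mul_add, Finset.mul_sum]
    congr 1
    exact Finset.sum_congr rfl fun i _ => by ring
  rw [Finset.sum_congr rfl fun j _ => h1 j, Finset.sum_add_distrib]
  congr 1
  rw [Finset.sum_comm]
  exact Finset.sum_congr rfl fun i _ => (Finset.sum_mul _ _ _).symm

lemma preimage_elem (A : Matrix (Fin m) (Fin n) ℤ) (b : Fin n → ℤ) {E : Set (Fin n → ℤ)}
    (h : ElementaryRegion E) :
    ElementaryRegion ((fun v : Fin m → ℤ => fun j => (∑ i, v i * A i j) + b j) ⁻¹' E) := by
  rcases h with ⟨a, β, rfl⟩ | ⟨a, β, rfl⟩ | ⟨a, β, c, hc, rfl⟩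
  · refine Or.inl ⟨fun i => ∑ j, A i j * a j, β - ∑ j, a j * b j, ?_⟩
    ext v
    simp only [Set.mem_preimage, Set.mem_setOf_eq, affine_sum]
    omega
  · refine Or.inr (Or.inl ⟨fun i => ∑ j, A i j * a j, β - ∑ j, a j * b j, ?_⟩)
    ext v
    simp only [Set.mem_preimage, Set.mem_setOf_eq, affine_sum]
    omega
  · refine Or.inr (Or.inr ⟨fun i => ∑ j, A i j * a j, β - ∑ j, a j * b j, c, hc, ?_⟩)
    ext v
    simp only [Set.mem_preimage, Set.mem_setOf_eq, affine_sum]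
    rw [Int.modEq_iff_dvd, Int.modEq_iff_dvd]
    have : β - ((∑ i, (∑ j, A i j * a j) * v i) + ∑ j, a j * b j)
        = (β - ∑ j, a j * b j) - ∑ i, (∑ j, A i j * a j) * v i := by ring
    rw [this]

lemma preimage_basic (A : Matrix (Fin m) (Fin n) ℤ) (b : Fin n → ℤ) {B : Set (Fin n → ℤ)}
    (h : BasicPolyhedral B) :
    BasicPolyhedral ((fun v : Fin m → ℤ => fun j => (∑ i, v i * A i j) + b j) ⁻¹' B) := by
  obtain ⟨k, E, hE, rfl⟩ := h
  exact ⟨k, fun i => _ ⁻¹' E i, fun i => preimage_elem A b (hE i), by rw [Set.preimage_iInter]⟩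

lemma preimage_poly (A : Matrix (Fin m) (Fin n) ℤ) (b : Fin n → ℤ) {Q : Set (Fin n → ℤ)}
    (h : Polyhedral Q) :
    Polyhedral ((fun v : Fin m → ℤ => fun j => (∑ i, v i * A i j) + b j) ⁻¹' Q) := by
  obtain ⟨k, B, hB, hd, rfl⟩ := h
  refine ⟨k, fun i => _ ⁻¹' B i, fun i => preimage_basic A b (hB i), ?_, ?_⟩
  · intro i j hij
    exact (hd i j hij).preimage _
  · rw [Set.preimage_iUnion]

end PolyAux

namespace PolyAux
open Set

variable {k : ℕ}

abbrev Form (k : ℕ) := (Fin k → ℤ) × ℤ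

def fev (f : Form k) (y : Fin k → ℤ) : ℤ := (∑ i, f.1 i * y i) + f.2

lemma modeq_congr {c X Y X' Y' : ℤ} (h : Y - X = Y' - X') :
    (X ≡ Y [ZMOD c]) ↔ (X' ≡ Y' [ZMOD c]) := by
  rw [Int.modEq_iff_dvd, Int.modEq_iff_dvd, h]

lemma modeq_congr_neg {c X Y X' Y' : ℤ} (h : Y - X = -(Y' - X')) :
    (X ≡ Y [ZMOD c]) ↔ (X' ≡ Y' [ZMOD c]) := by
  rw [Int.modEq_iff_dvd, Int.modEq_iff_dvd, h, dvd_neg]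

lemma sum_sub (a b z : Fin k → ℤ) :
    (∑ i, (a i - b i) * z i) = (∑ i, a i * z i) - ∑ i, b i * z i := by
  simp [sub_mul, Finset.sum_sub_distrib]

lemma basic_forall_mem {ι : Type*} (l : List ι) (F : ι → Set (Fin k → ℤ))
    (hF : ∀ x ∈ l, ElementaryRegion (F x)) : BasicPolyhedral {y | ∀ x ∈ l, y ∈ F x} := by
  refine basic_iff_list.mpr ⟨l.map F, ?_, ?_⟩
  · intro E hE
    obtain ⟨x, hx, rfl⟩ := List.mem_map.mp hE
    exact hF x hx
  · ext z
    simp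

lemma exists_max_list {ι : Type*} : ∀ (l : List ι), l ≠ [] → ∀ (g : ι → ℤ),
    ∃ a ∈ l, ∀ b ∈ l, g b ≤ g a := by
  intro l
  induction l with
  | nil => intro h; exact absurd rfl h
  | cons a l ih =>
    intro _ g
    rcases eq_or_ne l [] with rfl | hl
    · exact ⟨a, by simp, by simp⟩
    · obtain ⟨b, hb, hmax⟩ := ih hl g
      rcases le_total (g b) (g a) with hba | hab
      · refine ⟨a, by simp, ?_⟩
        rintro c hc
        rcases List.mem_cons.mp hc with rfl | hc
        · exact le_refl _
        · exact (hmax c hc).trans hba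
      · refine ⟨b, by simp [hb], ?_⟩
        rintro c hc
        rcases List.mem_cons.mp hc with rfl | hc
        · exact hab
        · exact hmax c hc

lemma emod_self_modeq (a C : ℤ) : a % C ≡ a [ZMOD C] :=
  Int.emod_emod_of_dvd _ dvd_rfl

lemma elim_forms (lo up : List (Form k)) (cg : List (Form k × ℤ))
    (hc : ∀ g ∈ cg, 0 < g.2) :
    Polyhedral {y : Fin k → ℤ | ∃ u : ℤ,
      (∀ f ∈ lo, fev f y < u) ∧ (∀ f ∈ up, u < fev f y) ∧
      (∀ g ∈ cg, u ≡ fev g.1 y [ZMOD g.2])} := by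
  classical
  set C : ℤ := (cg.map (fun g => g.2)).prod with hCdef
  have hC : 0 < C := by
    refine List.prod_pos ?_
    intro x hx
    obtain ⟨g, hg, rfl⟩ := List.mem_map.mp hx
    exact hc g hg
  have hdvd : ∀ g ∈ cg, g.2 ∣ C := fun g hg => List.dvd_prod (List.mem_map.mpr ⟨g, hg, rfl⟩)
  rcases eq_or_ne lo [] with rfl | hlo
  · -- no lower bounds
    have key : {y : Fin k → ℤ | ∃ u : ℤ,
        (∀ f ∈ ([] : List (Form k)), fev f y < u) ∧ (∀ f ∈ up, u < fev f y) ∧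
        (∀ g ∈ cg, u ≡ fev g.1 y [ZMOD g.2])}
        = {y | ∃ d ∈ Finset.range C.toNat,
            y ∈ {y' | ∀ g ∈ cg, (∑ i, g.1.1 i * y' i) ≡ ((d:ℕ):ℤ) - g.1.2 [ZMOD g.2]}} := by
      ext y
      simp only [Set.mem_setOf_eq, List.not_mem_nil, false_implies, implies_true, true_and,
        Finset.mem_range]
      constructor
      · rintro ⟨u, _, hcg⟩
        have h0 : (0:ℤ) ≤ u % C := Int.emod_nonneg _ (by omega)
        have h1 : u % C < C := Int.emod_lt_of_pos _ hC
        refine ⟨(u % C).toNat, by omega, ?_⟩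
        intro g hg
        have hud : ((((u % C).toNat : ℕ)):ℤ) = u % C := by omega
        have hmod : u % C ≡ u [ZMOD g.2] := (emod_self_modeq u C).of_dvd (hdvd g hg)
        have h2 : u % C ≡ fev g.1 y [ZMOD g.2] := hmod.trans (hcg g hg)
        rw [hud]
        refine (modeq_congr_neg (X := u % C) (Y := fev g.1 y) ?_).mp h2
        simp only [fev]
        ring
      · rintro ⟨d, hd, hcong⟩
        set N : ℤ := (up.map (fun f => |((d:ℕ):ℤ) - fev f y|)).sum + 1 with hN
        have hNpos : 0 < N := by
          have : (0:ℤ) ≤ (up.map (fun f => |((d:ℕ):ℤ) - fev f y|)).sum :=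
            List.sum_nonneg (by
              intro x hx
              obtain ⟨f, _, rfl⟩ := List.mem_map.mp hx
              exact abs_nonneg _)
          omega
        refine ⟨((d:ℕ):ℤ) - C * N, ?_, ?_⟩
        · intro f hf
          have hmem : |((d:ℕ):ℤ) - fev f y| ∈ up.map (fun f => |((d:ℕ):ℤ) - fev f y|) :=
            List.mem_map.mpr ⟨f, hf, rfl⟩
          have hle : |((d:ℕ):ℤ) - fev f y| ≤ N - 1 := by
            have := List.single_le_sum (l := up.map (fun f => |((d:ℕ):ℤ) - fev f y|))
              (by
                intro x hx
                obtain ⟨f', _, rfl⟩ := List.mem_map.mp hx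
                exact abs_nonneg _) _ hmem
            omega
          have hCN : N ≤ C * N := le_mul_of_one_le_left (by omega) (by omega)
          have habs : ((d:ℕ):ℤ) - fev f y ≤ |((d:ℕ):ℤ) - fev f y| := le_abs_self _
          omega
        · intro g hg
          have h1 : ((d:ℕ):ℤ) - C * N ≡ ((d:ℕ):ℤ) [ZMOD g.2] := by
            rw [Int.modEq_iff_dvd]
            have : ((d:ℕ):ℤ) - (((d:ℕ):ℤ) - C * N) = C * N := by ring
            rw [this]
            exact Dvd.dvd.mul_right (hdvd g hg) N
          refine h1.trans ?_
          have h2 := hcong g hg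
          refine (modeq_congr_neg ?_).mpr h2
          simp only [fev]
          ring
    rw [key]
    refine poly_union_finset _ _ ?_
    intro d _
    refine poly_of_basic (basic_forall_mem cg
      (fun g => {y' | (∑ i, g.1.1 i * y' i) ≡ ((d:ℕ):ℤ) - g.1.2 [ZMOD g.2]}) ?_)
    intro g hg
    exact Or.inr (Or.inr ⟨g.1.1, ((d:ℕ):ℤ) - g.1.2, g.2, hc g hg, rfl⟩)
  · -- at least one lower bound
    have key : {y : Fin k → ℤ | ∃ u : ℤ,
        (∀ f ∈ lo, fev f y < u) ∧ (∀ f ∈ up, u < fev f y) ∧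
        (∀ g ∈ cg, u ≡ fev g.1 y [ZMOD g.2])}
        = {y | ∃ f ∈ lo, y ∈ {y' | ∃ d ∈ Finset.Icc (1:ℤ) C,
            y' ∈ {y'' | (∀ f' ∈ lo, (∑ i, (f.1 i - f'.1 i) * y'' i) > f'.2 - f.2 - d) ∧
              (∀ f' ∈ up, (∑ i, (f'.1 i - f.1 i) * y'' i) > f.2 + d - f'.2) ∧
              (∀ g ∈ cg, (∑ i, (g.1.1 i - f.1 i) * y'' i) ≡ f.2 + d - g.1.2 [ZMOD g.2])}}} := by
      ext y
      simp only [Set.mem_setOf_eq, Finset.mem_Icc]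
      constructor
      · rintro ⟨u, hlow, hup, hcg⟩
        obtain ⟨f, hf, hfmax⟩ := exists_max_list lo hlo (fun f => fev f y)
        set a : ℤ := u - fev f y - 1 with ha
        have ha0 : 0 ≤ a := by have := hlow f hf; omega
        set r : ℤ := a % C with hr
        have hr0 : 0 ≤ r := Int.emod_nonneg _ (by omega)
        have hr1 : r < C := Int.emod_lt_of_pos _ hC
        have hrle : r ≤ a := by
          have h1 : a % C = a - C * (a / C) := Int.emod_def a C
          have h2 : 0 ≤ a / C := Int.ediv_nonneg ha0 (by omega)
          nlinarith
        have hrmod : r ≡ a [ZMOD C] := emod_self_modeq a C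
        refine ⟨f, hf, r + 1, ⟨by omega, by omega⟩, ?_, ?_, ?_⟩
        · intro f' hf'
          have h1 : fev f' y ≤ fev f y := hfmax f' hf'
          rw [sum_sub]
          simp only [fev] at h1 ⊢
          omega
        · intro f' hf'
          have h1 : u < fev f' y := hup f' hf'
          have h2 : r + 1 ≤ u - fev f y := by omega
          rw [sum_sub]
          simp only [fev] at h1 h2 ⊢
          omega
        · intro g hg
          have h1 : fev f y + (r + 1) ≡ u [ZMOD C] := by
            rw [Int.modEq_iff_dvd]
            have heq : u - (fev f y + (r + 1)) = a - r := by omega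
            rw [heq]
            exact (Int.modEq_iff_dvd.mp hrmod)
          have h2 : fev f y + (r + 1) ≡ fev g.1 y [ZMOD g.2] :=
            (h1.of_dvd (hdvd g hg)).trans (hcg g hg)
          refine (modeq_congr_neg (c := g.2) ?_).mp h2
          rw [sum_sub]
          simp only [fev]
          ring
      · rintro ⟨f, hf, d, ⟨hd1, hd2⟩, hlow, hup, hcg⟩
        refine ⟨fev f y + d, ?_, ?_, ?_⟩
        · intro f' hf'
          have := hlow f' hf'
          rw [sum_sub] at this
          simp only [fev] at this ⊢
          omega
        · intro f' hf'
          have := hup f' hf'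
          rw [sum_sub] at this
          simp only [fev] at this ⊢
          omega
        · intro g hg
          have := hcg g hg
          refine (modeq_congr_neg (c := g.2) ?_).mpr this
          rw [sum_sub]
          simp only [fev]
          ring
    rw [key]
    refine poly_union_list lo _ ?_
    intro f _
    refine poly_union_finset _ _ ?_
    intro d _
    refine poly_of_basic ?_
    have b1 : BasicPolyhedral {y'' : Fin k → ℤ |
        ∀ f' ∈ lo, y'' ∈ {y | (∑ i, (f.1 i - f'.1 i) * y i) > f'.2 - f.2 - d}} :=
      basic_forall_mem lo _ (fun f' _ => Or.inr (Or.inl ⟨_, _, rfl⟩))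
    have b2 : BasicPolyhedral {y'' : Fin k → ℤ |
        ∀ f' ∈ up, y'' ∈ {y | (∑ i, (f'.1 i - f.1 i) * y i) > f.2 + d - f'.2}} :=
      basic_forall_mem up _ (fun f' _ => Or.inr (Or.inl ⟨_, _, rfl⟩))
    have b3 : BasicPolyhedral {y'' : Fin k → ℤ |
        ∀ g ∈ cg, y'' ∈ {y | (∑ i, (g.1.1 i - f.1 i) * y i) ≡ f.2 + d - g.1.2 [ZMOD g.2]}} :=
      basic_forall_mem cg _ (fun g hg => Or.inr (Or.inr ⟨_, _, g.2, hc g hg, rfl⟩))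
    have := basic_inter (basic_inter b1 b2) b3
    convert this using 1
    ext y
    simp only [Set.mem_setOf_eq, Set.mem_inter_iff]
    tauto

end PolyAux

namespace PolyAux
open Set

structure Atm (k : ℕ) where
  al : ℤ
  a : Fin k → ℤ
  b : ℤ
  c : ℤ

def Atm.holds (A : Atm k) (x : ℤ) (y : Fin k → ℤ) : Prop :=
  if A.c = 0 then A.b < A.al * x + (∑ i, A.a i * y i)
  else A.al * x + (∑ i, A.a i * y i) ≡ A.b [ZMOD A.c]

lemma convert_atoms (l : List (Atm k)) (hc : ∀ A ∈ l, 0 ≤ A.c)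
    (hal : ∀ A ∈ l, A.al = 1 ∨ A.al = -1 ∨ A.al = 0) :
    ∃ (pure : List (Set (Fin k → ℤ))) (lo up : List (Form k)) (cg : List (Form k × ℤ)),
      (∀ E ∈ pure, ElementaryRegion E) ∧ (∀ g ∈ cg, 0 < g.2) ∧
      ∀ (u : ℤ) (y : Fin k → ℤ),
        ((∀ A ∈ l, A.holds u y) ↔
          ((∀ E ∈ pure, y ∈ E) ∧ (∀ f ∈ lo, fev f y < u) ∧ (∀ f ∈ up, u < fev f y) ∧
           (∀ g ∈ cg, u ≡ fev g.1 y [ZMOD g.2]))) := by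
  classical
  induction l with
  | nil => exact ⟨[], [], [], [], by simp, by simp, by simp⟩
  | cons A l ih =>
    obtain ⟨pure, lo, up, cg, h1, h2, h3⟩ :=
      ih (fun A' hA' => hc A' (List.mem_cons_of_mem _ hA'))
        (fun A' hA' => hal A' (List.mem_cons_of_mem _ hA'))
    have hcA : 0 ≤ A.c := hc A (List.mem_cons_self)
    rcases hal A (List.mem_cons_self) with h | h | h
    · by_cases hc0 : A.c = 0
      · -- al = 1, strict inequality: lower bound
        have hatom : ∀ u y, A.holds u y ↔ fev (fun i => -(A.a i), A.b) y < u := by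
          intro u y
          simp only [Atm.holds, if_pos hc0, h, one_mul, fev, sum_neg]
          omega
        refine ⟨pure, (fun i => -(A.a i), A.b) :: lo, up, cg, h1, h2, ?_⟩
        intro u y
        rw [List.forall_mem_cons, h3 u y, List.forall_mem_cons, hatom u y]
        tauto
      · -- al = 1, congruence
        have hatom : ∀ u y, A.holds u y ↔
            u ≡ fev (fun i => -(A.a i), A.b) y [ZMOD A.c] := by
          intro u y
          simp only [Atm.holds, if_neg hc0, h, one_mul, fev, sum_neg]
          exact modeq_congr (by ring)
        refine ⟨pure, lo, up, ((fun i => -(A.a i), A.b), A.c) :: cg, h1, ?_, ?_⟩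
        · intro g hg
          rcases List.mem_cons.mp hg with rfl | hg
          · simpa using by omega
          · exact h2 g hg
        · intro u y
          rw [List.forall_mem_cons, h3 u y, List.forall_mem_cons, hatom u y]
          tauto
    · by_cases hc0 : A.c = 0
      · -- al = -1, strict inequality: upper bound
        have hatom : ∀ u y, A.holds u y ↔ u < fev (A.a, -A.b) y := by
          intro u y
          simp only [Atm.holds, if_pos hc0, h, neg_one_mul, fev]
          omega
        refine ⟨pure, lo, (A.a, -A.b) :: up, cg, h1, h2, ?_⟩
        intro u y
        rw [List.forall_mem_cons, h3 u y, List.forall_mem_cons, hatom u y]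
        tauto
      · -- al = -1, congruence
        have hatom : ∀ u y, A.holds u y ↔ u ≡ fev (A.a, -A.b) y [ZMOD A.c] := by
          intro u y
          simp only [Atm.holds, if_neg hc0, h, neg_one_mul, fev]
          exact modeq_congr_neg (by ring)
        refine ⟨pure, lo, up, ((A.a, -A.b), A.c) :: cg, h1, ?_, ?_⟩
        · intro g hg
          rcases List.mem_cons.mp hg with rfl | hg
          · simpa using by omega
          · exact h2 g hg
        · intro u y
          rw [List.forall_mem_cons, h3 u y, List.forall_mem_cons, hatom u y]
          tauto
    · -- al = 0: pure condition on y
      set E : Set (Fin k → ℤ) :=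
        if A.c = 0 then {y | A.b < (∑ i, A.a i * y i)}
        else {y | (∑ i, A.a i * y i) ≡ A.b [ZMOD A.c]} with hE
      have hEelem : ElementaryRegion E := by
        rw [hE]
        split
        · exact Or.inr (Or.inl ⟨A.a, A.b, rfl⟩)
        · exact Or.inr (Or.inr ⟨A.a, A.b, A.c, by omega, rfl⟩)
      have hatom : ∀ u y, A.holds u y ↔ y ∈ E := by
        intro u y
        rw [hE]
        simp only [Atm.holds, h, zero_mul, zero_add]
        split <;> simp
      refine ⟨E :: pure, lo, up, cg, ?_, h2, ?_⟩
      · intro E' hE'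
        rcases List.mem_cons.mp hE' with rfl | hE'
        exacts [hEelem, h1 E' hE']
      · intro u y
        rw [List.forall_mem_cons, h3 u y, List.forall_mem_cons, hatom u y]
        tauto

lemma elim_unit_atoms (l : List (Atm k)) (hc : ∀ A ∈ l, 0 ≤ A.c)
    (hal : ∀ A ∈ l, A.al = 1 ∨ A.al = -1 ∨ A.al = 0) :
    Polyhedral {y : Fin k → ℤ | ∃ u, ∀ A ∈ l, A.holds u y} := by
  obtain ⟨pure, lo, up, cg, h1, h2, h3⟩ := convert_atoms l hc hal
  have hset : {y : Fin k → ℤ | ∃ u, ∀ A ∈ l, A.holds u y}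
      = {y | ∀ E ∈ pure, y ∈ E} ∩ {y | ∃ u, (∀ f ∈ lo, fev f y < u) ∧
          (∀ f ∈ up, u < fev f y) ∧ (∀ g ∈ cg, u ≡ fev g.1 y [ZMOD g.2])} := by
    ext y
    simp only [Set.mem_setOf_eq, Set.mem_inter_iff]
    constructor
    · rintro ⟨u, hu⟩
      have := (h3 u y).mp hu
      exact ⟨this.1, u, this.2⟩
    · rintro ⟨hp, u, hu⟩
      exact ⟨u, (h3 u y).mpr ⟨hp, hu⟩⟩
  rw [hset]
  exact poly_inter (poly_of_basic (basic_forall_mem pure (fun E => E) h1))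
    (elim_forms lo up cg h2)

lemma elim_atoms (l : List (Atm k)) (hc : ∀ A ∈ l, 0 ≤ A.c) :
    Polyhedral {y : Fin k → ℤ | ∃ x, ∀ A ∈ l, A.holds x y} := by
  classical
  set D : ℤ := (l.map (fun A => if A.al = 0 then 1 else |A.al|)).prod with hD
  have hDpos : 0 < D := by
    refine List.prod_pos ?_
    intro x hx
    obtain ⟨A, hA, rfl⟩ := List.mem_map.mp hx
    split
    · omega
    · next h0 => exact abs_pos.mpr h0
  have hdvd : ∀ A ∈ l, A.al ≠ 0 → |A.al| ∣ D := by
    intro A hA h0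
    have : |A.al| = (if A.al = 0 then 1 else |A.al|) := by rw [if_neg h0]
    rw [this, hD]
    exact List.dvd_prod (List.mem_map.mpr ⟨A, hA, rfl⟩)
  set norm : Atm k → Atm k := fun A =>
    if A.al = 0 then A else
      ⟨if 0 < A.al then 1 else -1, fun i => (D / |A.al|) * A.a i,
        (D / |A.al|) * A.b, (D / |A.al|) * A.c⟩ with hnorm
  have hq : ∀ A ∈ l, A.al ≠ 0 → 0 < D / |A.al| ∧ (D / |A.al|) * |A.al| = D := by
    intro A hA h0
    have habs : 0 < |A.al| := abs_pos.mpr h0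
    have hmul : (D / |A.al|) * |A.al| = D := Int.ediv_mul_cancel (hdvd A hA h0)
    refine ⟨?_, hmul⟩
    rcases mul_pos_iff.mp (hmul ▸ hDpos) with ⟨hq, _⟩ | ⟨_, habs'⟩
    · exact hq
    · omega
  have key : ∀ A ∈ l, ∀ (x : ℤ) (y : Fin k → ℤ), (A.holds x y ↔ (norm A).holds (D * x) y) := by
    intro A hA x y
    by_cases h0 : A.al = 0
    · simp [hnorm, h0, Atm.holds]
    · obtain ⟨hqpos, hqmul⟩ := hq A hA h0
      have hcA := hc A hA
      have hE : (if 0 < A.al then (1:ℤ) else -1) * (D * x)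
          + (D / |A.al|) * (∑ i, A.a i * y i)
          = (D / |A.al|) * (A.al * x + ∑ i, A.a i * y i) := by
        rcases lt_or_gt_of_ne h0 with hs | hs
        · rw [if_neg (by omega)]
          have hh : (D / |A.al|) * A.al = -D := by
            have h2 : D / |A.al| * A.al = -(D / |A.al| * |A.al|) := by
              rw [abs_of_neg hs]; ring
            rw [h2, hqmul]
          linear_combination (-x) * hh
        · rw [if_pos hs]
          have hh : (D / |A.al|) * A.al = D := by
            have h2 : D / |A.al| * A.al = D / |A.al| * |A.al| := by
              rw [abs_of_pos hs]
            rw [h2, hqmul]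
          linear_combination (-x) * hh
      have hS : (∑ i, ((D / |A.al|) * A.a i) * y i)
          = (D / |A.al|) * (∑ i, A.a i * y i) := by
        rw [Finset.mul_sum]
        exact Finset.sum_congr rfl fun i _ => by ring
      by_cases hc0 : A.c = 0
      · simp only [Atm.holds, hnorm, if_neg h0, hc0, mul_zero, if_pos rfl]
        rw [hS, hE]
        constructor
        · intro hlt
          exact (mul_lt_mul_iff_right₀ hqpos).mpr hlt
        · intro hlt
          exact (mul_lt_mul_iff_right₀ hqpos).mp hlt
      · have hcpos : 0 < A.c := by omega
        have hqc : (D / |A.al|) * A.c ≠ 0 := by positivity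
        simp only [Atm.holds, hnorm, if_neg h0, if_neg hc0, if_neg hqc]
        rw [hS, hE]
        rw [Int.modEq_iff_dvd, Int.modEq_iff_dvd]
        rw [show (D / |A.al|) * A.b - (D / |A.al|) * (A.al * x + ∑ i, A.a i * y i)
            = (D / |A.al|) * (A.b - (A.al * x + ∑ i, A.a i * y i)) by ring]
        exact (mul_dvd_mul_iff_left (by positivity : (D / |A.al|) ≠ 0)).symm
  have hset : {y : Fin k → ℤ | ∃ x, ∀ A ∈ l, A.holds x y}
      = {y | ∃ u, ∀ A' ∈ (⟨1, fun _ => 0, 0, D⟩ : Atm k) :: l.map norm, A'.holds u y} := by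
    ext y
    simp only [Set.mem_setOf_eq, List.forall_mem_cons]
    constructor
    · rintro ⟨x, hx⟩
      refine ⟨D * x, ?_, ?_⟩
      · simp only [Atm.holds]
        rw [if_neg (show ¬ (⟨1, fun _ => 0, 0, D⟩ : Atm k).c = 0 by show ¬ D = 0; omega)]
        simp only [one_mul, zero_mul, Finset.sum_const_zero, add_zero]
        rw [Int.modEq_iff_dvd]
        exact ⟨-x, by ring⟩
      · intro A' hA'
        obtain ⟨A, hA, rfl⟩ := List.mem_map.mp hA'
        exact (key A hA x y).mp (hx A hA)
    · rintro ⟨u, hhead, hrest⟩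
      have hdu : D ∣ u := by
        simp only [Atm.holds] at hhead
        rw [if_neg (show ¬ (⟨1, fun _ => 0, 0, D⟩ : Atm k).c = 0 by show ¬ D = 0; omega)] at hhead
        simp only [one_mul, zero_mul, Finset.sum_const_zero, add_zero,
          Int.modEq_iff_dvd] at hhead
        have : D ∣ -u := by simpa using hhead
        exact (dvd_neg.mp this)
      obtain ⟨x, rfl⟩ := hdu
      refine ⟨x, fun A hA => (key A hA x y).mpr ?_⟩
      exact hrest (norm A) (List.mem_map_of_mem hA)
  rw [hset]
  refine elim_unit_atoms _ ?_ ?_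
  · intro A' hA'
    rcases List.mem_cons.mp hA' with rfl | hA'
    · simpa using hDpos.le
    · obtain ⟨A, hA, rfl⟩ := List.mem_map.mp hA'
      by_cases h0 : A.al = 0
      · simpa [hnorm, h0] using hc A hA
      · have := (hq A hA h0).1
        simp only [hnorm, if_neg h0]
        exact mul_nonneg this.le (hc A hA)
  · intro A' hA'
    rcases List.mem_cons.mp hA' with rfl | hA'
    · simp
    · obtain ⟨A, hA, rfl⟩ := List.mem_map.mp hA'
      by_cases h0 : A.al = 0
      · simp [hnorm, h0]
      · simp only [hnorm, if_neg h0]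
        split
        · simp
        · simp

end PolyAux

namespace PolyAux
open Set

lemma snoc_sum (a : Fin (k+1) → ℤ) (y : Fin k → ℤ) (x : ℤ) :
    (∑ i, a i * (Fin.snoc y x : Fin (k+1) → ℤ) i)
      = a (Fin.last k) * x + ∑ i : Fin k, a i.castSucc * y i := by
  rw [Fin.sum_univ_castSucc]
  simp only [Fin.snoc_castSucc, Fin.snoc_last]
  ring

lemma elems_to_atoms : ∀ (l : List (Set (Fin (k+1) → ℤ))), (∀ E ∈ l, ElementaryRegion E) →
    ∃ atoms : List (Atm k), (∀ A ∈ atoms, 0 ≤ A.c) ∧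
      ∀ (x : ℤ) (y : Fin k → ℤ),
        ((∀ E ∈ l, Fin.snoc y x ∈ E) ↔ ∀ A ∈ atoms, A.holds x y) := by
  intro l
  induction l with
  | nil => exact fun _ => ⟨[], by simp, by simp⟩
  | cons E l ih =>
    intro hE
    obtain ⟨atoms, hc, hiff⟩ := ih (fun E' h => hE E' (List.mem_cons_of_mem _ h))
    rcases hE E (List.mem_cons_self) with ⟨a, b, rfl⟩ | ⟨a, b, rfl⟩ | ⟨a, b, c, hcpos, rfl⟩
    · refine ⟨⟨a (Fin.last k), fun i => a i.castSucc, b - 1, 0⟩ ::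
              ⟨-(a (Fin.last k)), fun i => -(a i.castSucc), -b - 1, 0⟩ :: atoms, ?_, ?_⟩
      · intro A hA
        rcases List.mem_cons.mp hA with rfl | hA
        · exact le_refl 0
        rcases List.mem_cons.mp hA with rfl | hA
        · exact le_refl 0
        · exact hc A hA
      · intro x y
        rw [List.forall_mem_cons, List.forall_mem_cons, List.forall_mem_cons, ← hiff x y]
        have h1 : (Fin.snoc y x ∈ {z : Fin (k+1) → ℤ | (∑ i, a i * z i) = b}) ↔
            ((⟨a (Fin.last k), fun i => a i.castSucc, b - 1, 0⟩ : Atm k).holds x y ∧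
             (⟨-(a (Fin.last k)), fun i => -(a i.castSucc), -b - 1, 0⟩ : Atm k).holds x y) := by
          simp only [Set.mem_setOf_eq, Atm.holds, eq_self_iff_true, if_true, snoc_sum, sum_neg, neg_mul, Finset.sum_neg_distrib]
          omega
        rw [h1]
        tauto
    · refine ⟨⟨a (Fin.last k), fun i => a i.castSucc, b, 0⟩ :: atoms, ?_, ?_⟩
      · intro A hA
        rcases List.mem_cons.mp hA with rfl | hA
        · exact le_refl 0
        · exact hc A hA
      · intro x y
        rw [List.forall_mem_cons, List.forall_mem_cons, ← hiff x y]
        have h1 : (Fin.snoc y x ∈ {z : Fin (k+1) → ℤ | (∑ i, a i * z i) > b}) ↔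
            ((⟨a (Fin.last k), fun i => a i.castSucc, b, 0⟩ : Atm k).holds x y) := by
          simp only [Set.mem_setOf_eq, Atm.holds, eq_self_iff_true, if_true, snoc_sum]
        rw [h1]
    · refine ⟨⟨a (Fin.last k), fun i => a i.castSucc, b, c⟩ :: atoms, ?_, ?_⟩
      · intro A hA
        rcases List.mem_cons.mp hA with rfl | hA
        · exact hcpos.le
        · exact hc A hA
      · intro x y
        rw [List.forall_mem_cons, List.forall_mem_cons, ← hiff x y]
        have h1 : (Fin.snoc y x ∈ {z : Fin (k+1) → ℤ | (∑ i, a i * z i) ≡ b [ZMOD c]}) ↔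
            ((⟨a (Fin.last k), fun i => a i.castSucc, b, c⟩ : Atm k).holds x y) := by
          simp only [Set.mem_setOf_eq, Atm.holds,
            if_neg (show ¬ (⟨a (Fin.last k), fun i => a i.castSucc, b, c⟩ : Atm k).c = 0 from
              by show ¬ c = 0; omega), snoc_sum]
        rw [h1]

lemma proj_basic {B : Set (Fin (k+1) → ℤ)} (h : BasicPolyhedral B) :
    Polyhedral {y : Fin k → ℤ | ∃ x, Fin.snoc y x ∈ B} := by
  obtain ⟨l, hl, rfl⟩ := basic_iff_list.mp h
  obtain ⟨atoms, hc, hiff⟩ := elems_to_atoms l hl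
  have : {y : Fin k → ℤ | ∃ x, Fin.snoc y x ∈ {z | ∀ E ∈ l, z ∈ E}}
      = {y | ∃ x, ∀ A ∈ atoms, A.holds x y} := by
    ext y
    simp only [Set.mem_setOf_eq]
    exact exists_congr fun x => hiff x y
  rw [this]
  exact elim_atoms atoms hc

lemma proj_poly {P : Set (Fin (k+1) → ℤ)} (h : Polyhedral P) :
    Polyhedral {y : Fin k → ℤ | ∃ x, Fin.snoc y x ∈ P} := by
  obtain ⟨N, B, hB, _, rfl⟩ := h
  have : {y : Fin k → ℤ | ∃ x, Fin.snoc y x ∈ ⋃ i, B i}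
      = ⋃ i, {y | ∃ x, Fin.snoc y x ∈ B i} := by
    ext y
    simp only [Set.mem_setOf_eq, Set.mem_iUnion]
    constructor
    · rintro ⟨x, i, hx⟩
      exact ⟨i, x, hx⟩
    · rintro ⟨i, x, hx⟩
      exact ⟨x, i, hx⟩
  rw [this]
  exact poly_union_fin _ fun i => proj_basic (hB i)

lemma proj_many {n : ℕ} : ∀ (j : ℕ) (P : Set (Fin (n + j) → ℤ)), Polyhedral P →
    Polyhedral {w : Fin n → ℤ | ∃ v : Fin j → ℤ, Fin.append w v ∈ P} := by
  intro j
  induction j with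
  | zero =>
    intro P hP
    have happ : ∀ (w : Fin n → ℤ) (v : Fin 0 → ℤ), Fin.append w v = w := by
      intro w v
      funext i
      have h : (i : ℕ) < n := i.isLt
      rw [show i = Fin.castAdd 0 ⟨i.1, h⟩ from by ext; rfl, Fin.append_left]
      rfl
    have : {w : Fin n → ℤ | ∃ v : Fin 0 → ℤ, Fin.append w v ∈ P} = P := by
      ext w
      simp only [Set.mem_setOf_eq]
      constructor
      · rintro ⟨v, hv⟩
        rwa [happ w v] at hv
      · intro hw
        exact ⟨fun i => i.elim0, by rwa [happ]⟩
    rw [this]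
    exact hP
  | succ j ih =>
    intro P hP
    have h1 : Polyhedral {u : Fin (n + j) → ℤ | ∃ x, Fin.snoc u x ∈ P} := proj_poly hP
    have h2 : {w : Fin n → ℤ | ∃ v : Fin (j+1) → ℤ, Fin.append w v ∈ P}
        = {w | ∃ v' : Fin j → ℤ, Fin.append w v'
            ∈ {u : Fin (n + j) → ℤ | ∃ x, Fin.snoc u x ∈ P}} := by
      ext w
      simp only [Set.mem_setOf_eq]
      constructor
      · rintro ⟨v, hv⟩
        refine ⟨Fin.init v, v (Fin.last j), ?_⟩
        rw [← Fin.append_snoc, Fin.snoc_init_self]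
        exact hv
      · rintro ⟨v', x, hx⟩
        exact ⟨Fin.snoc v' x, by rwa [Fin.append_snoc]⟩
    rw [h2]
    exact ih _ h1

end PolyAux

namespace PolyAux
open Set

lemma graph_row {m n : ℕ} (w : Fin n → ℤ) (v : Fin m → ℤ) (A : Matrix (Fin m) (Fin n) ℤ)
    (j : Fin n) :
    (∑ i', (Fin.addCases (fun j' : Fin n => if j' = j then (1:ℤ) else 0)
        (fun i : Fin m => -(A i j)) i') * (Fin.append w v) i')
    = w j - ∑ i, v i * A i j := by
  rw [Fin.sum_univ_add]
  have h1 : ∀ j' : Fin n, (Fin.addCases (fun j' : Fin n => if j' = j then (1:ℤ) else 0)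
      (fun i : Fin m => -(A i j)) (Fin.castAdd m j')) * (Fin.append w v) (Fin.castAdd m j')
      = (if j' = j then (1:ℤ) else 0) * w j' := by
    intro j'
    rw [Fin.addCases_left, Fin.append_left]
  have h2 : ∀ i : Fin m, (Fin.addCases (fun j' : Fin n => if j' = j then (1:ℤ) else 0)
      (fun i : Fin m => -(A i j)) (Fin.natAdd n i)) * (Fin.append w v) (Fin.natAdd n i)
      = -(A i j) * v i := by
    intro i
    rw [Fin.addCases_right, Fin.append_right]
  rw [Finset.sum_congr rfl (fun j' _ => h1 j'), Finset.sum_congr rfl (fun i _ => h2 i)]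
  have h3 : (∑ j' : Fin n, (if j' = j then (1:ℤ) else 0) * w j') = w j := by
    simp [ite_mul]
  have h4 : (∑ i : Fin m, -(A i j) * v i) = -∑ i, v i * A i j := by
    simp only [neg_mul, Finset.sum_neg_distrib]
    congr 1
    exact Finset.sum_congr rfl fun i _ => mul_comm _ _
  rw [h3, h4]
  ring

lemma image_poly {m n : ℕ} (A : Matrix (Fin m) (Fin n) ℤ) (b : Fin n → ℤ)
    {P : Set (Fin m → ℤ)} (hP : Polyhedral P) :
    Polyhedral ((fun v : Fin m → ℤ => fun j => (∑ i, v i * A i j) + b j) '' P) := by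
  classical
  set G : Set (Fin (n + m) → ℤ) :=
    {z | (fun i => z (Fin.natAdd n i)) ∈ P} ∩
    ⋂ j : Fin n, {z | (∑ i', (Fin.addCases (fun j' : Fin n => if j' = j then (1:ℤ) else 0)
        (fun i : Fin m => -(A i j)) i') * z i') = b j} with hGdef
  have hG1 : Polyhedral {z : Fin (n+m) → ℤ | (fun i => z (Fin.natAdd n i)) ∈ P} := by
    have hpre := preimage_poly (m := n + m) (n := m)
      (fun i' i => if i' = Fin.natAdd n i then (1:ℤ) else 0) (fun _ => 0) hP
    have heq : ((fun v : Fin (n+m) → ℤ => fun j : Fin m =>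
        (∑ i', v i' * (if i' = Fin.natAdd n j then (1:ℤ) else 0)) + (fun _ : Fin m => (0:ℤ)) j)
          ⁻¹' P) = {z : Fin (n+m) → ℤ | (fun i => z (Fin.natAdd n i)) ∈ P} := by
      ext z
      simp only [Set.mem_preimage, Set.mem_setOf_eq]
      have hfun : (fun j : Fin m => (∑ i', z i' * (if i' = Fin.natAdd n j then (1:ℤ) else 0))
          + (fun _ : Fin m => (0:ℤ)) j) = fun i => z (Fin.natAdd n i) := by
        funext j
        simp [mul_ite]
      rw [hfun]
    rwa [heq] at hpre
  have hG2 : BasicPolyhedral (⋂ j : Fin n,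
      {z : Fin (n+m) → ℤ | (∑ i', (Fin.addCases (fun j' : Fin n => if j' = j then (1:ℤ) else 0)
        (fun i : Fin m => -(A i j)) i') * z i') = b j}) :=
    ⟨n, _, fun j => Or.inl ⟨_, b j, rfl⟩, rfl⟩
  have hGpoly : Polyhedral G := poly_inter_basic hG1 hG2
  have himg : ((fun v : Fin m → ℤ => fun j => (∑ i, v i * A i j) + b j) '' P)
      = {w : Fin n → ℤ | ∃ v : Fin m → ℤ, Fin.append w v ∈ G} := by
    ext w
    simp only [Set.mem_image, Set.mem_setOf_eq, hGdef, Set.mem_inter_iff, Set.mem_iInter]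
    constructor
    · rintro ⟨v, hv, rfl⟩
      refine ⟨v, ?_, ?_⟩
      · have hvv : (fun i => Fin.append (fun j => (∑ i, v i * A i j) + b j) v
            (Fin.natAdd n i)) = v :=
          funext fun i => Fin.append_right _ _ _
        rw [hvv]
        exact hv
      · intro j
        rw [graph_row]
        show ((∑ i, v i * A i j) + b j) - (∑ i, v i * A i j) = b j
        ring
    · rintro ⟨v, hvP, hrow⟩
      have hvv : (fun i => Fin.append w v (Fin.natAdd n i)) = v :=
        funext fun i => Fin.append_right _ _ _
      rw [hvv] at hvP
      refine ⟨v, hvP, ?_⟩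
      funext j
      have h5 := hrow j
      rw [graph_row] at h5
      show (∑ i, v i * A i j) + b j = w j
      omega
  rw [himg]
  exact proj_many m G hGpoly

end PolyAux

/-- Images and preimages of polyhedral sets under integer affine transforms
`v ↦ vA + b` are polyhedral. -/
theorem polyhedral_affine_image_preimage {m n : ℕ}
    (A : Matrix (Fin m) (Fin n) ℤ) (b : Fin n → ℤ)
    (P : Set (Fin m → ℤ)) (Q : Set (Fin n → ℤ))
    (hP : Polyhedral P) (hQ : Polyhedral Q) :
    Polyhedral ((fun v : Fin m → ℤ => fun j => (∑ i, v i * A i j) + b j) '' P) ∧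
    Polyhedral ((fun v : Fin m → ℤ => fun j => (∑ i, v i * A i j) + b j) ⁻¹' Q) :=
  ⟨PolyAux.image_poly A b hP, PolyAux.preimage_poly A b hQ⟩
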